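/- Let c(ρ) be a logarithmically concave positive function on (r₁, r₂) and A₁,…,A_n a finite family of m×m matrices whose entries are Laurent series converging on the annulus r₁ < |x| < r₂, such that max_{1≤i≤n} ‖A_i‖(ρ) ≥ c(ρ) for all ρ ∈ (r₁, r₂). Then there exist scalars λ_i ∈ {0,1} such that ‖Σᵢ λ_i A_i‖(ρ) ≥ c(ρ) for all ρ ∈ (r₁, r₂). -/

import Mathlib

open scoped ENNReal
open Filter

namespace Thm504Aux

variable {K : Type*} [Field K] (abv : AbsoluteValue K ℝ)

/-- The Gauss norm as a function. -/
noncomputable def Nf (m : ℕ) (B : Matrix (Fin m) (Fin m) (ℤ → K)) (ρ : ℝ) : ℝ≥0∞ :=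
  ⨆ r', ⨆ c', ⨆ k : ℤ, ENNReal.ofReal (abv (B r' c' k) * ρ ^ k)

lemma term_le_Nf {m : ℕ} (B : Matrix (Fin m) (Fin m) (ℤ → K)) (ρ : ℝ)
    (r' c' : Fin m) (k : ℤ) :
    ENNReal.ofReal (abv (B r' c' k) * ρ ^ k) ≤ Nf abv m B ρ := by
  refine le_trans ?_ (le_iSup _ r')
  refine le_trans ?_ (le_iSup _ c')
  exact le_iSup (fun k : ℤ => ENNReal.ofReal (abv (B r' c' k) * ρ ^ k)) k

lemma Nf_le {m : ℕ} {B : Matrix (Fin m) (Fin m) (ℤ → K)} {ρ : ℝ} {M : ℝ≥0∞}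
    (h : ∀ r' c' (k : ℤ), ENNReal.ofReal (abv (B r' c' k) * ρ ^ k) ≤ M) :
    Nf abv m B ρ ≤ M :=
  iSup_le fun r' => iSup_le fun c' => iSup_le fun k => h r' c' k

/-- Non-archimedean: if the absolute values differ, `abv x ≤ abv (x + y)`. -/
lemma abv_le_abv_add (hna : IsNonarchimedean (abv : K → ℝ)) {x y : K}
    (h : abv x ≠ abv y) : abv x ≤ abv (x + y) := by
  by_contra hlt
  push_neg at hlt
  have h1 : abv x ≤ max (abv (x + y)) (abv y) := by
    have := hna (x + y) (-y)
    simpa using this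
  have hxy : abv x ≤ abv y := by
    rcases le_max_iff.mp h1 with h' | h'
    · exact absurd h' (not_le.mpr hlt)
    · exact h'
  have h2 : abv y ≤ max (abv (x + y)) (abv x) := by
    have := hna (x + y) (-x)
    simpa [add_comm] using this
  have hyx : abv y ≤ abv x := by
    rcases le_max_iff.mp h2 with h' | h'
    · exact h'.trans hlt.le
    · exact h'
  exact h (le_antisymm hxy hyx)

/-- Log-convexity: the "bad set" is order-convex. -/
lemma bad_mid {m : ℕ} {r₁ r₂ : ℝ} (hr₁ : 0 < r₁)
    {c : ℝ → ℝ} (hcpos : ∀ ρ ∈ Set.Ioo r₁ r₂, 0 < c ρ)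
    (hcconc : ConcaveOn ℝ (Real.log '' Set.Ioo r₁ r₂)
      (fun t => Real.log (c (Real.exp t))))
    (B : Matrix (Fin m) (Fin m) (ℤ → K))
    {ρ₁ ρ ρ₂ : ℝ} (h1 : ρ₁ ∈ Set.Ioo r₁ r₂) (hmem : ρ ∈ Set.Ioo r₁ r₂)
    (h2 : ρ₂ ∈ Set.Ioo r₁ r₂) (hle1 : ρ₁ ≤ ρ) (hle2 : ρ ≤ ρ₂)
    (hb1 : Nf abv m B ρ₁ < ENNReal.ofReal (c ρ₁))
    (hb2 : Nf abv m B ρ₂ < ENNReal.ofReal (c ρ₂)) :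
    Nf abv m B ρ < ENNReal.ofReal (c ρ) := by
  rcases hle1.eq_or_lt with rfl | hlt1
  · exact hb1
  rcases hle2.eq_or_lt with rfl | hlt2
  · exact hb2
  have hρ₁ : 0 < ρ₁ := hr₁.trans h1.1
  have hρ : 0 < ρ := hr₁.trans hmem.1
  have hρ₂ : 0 < ρ₂ := hr₁.trans h2.1
  have hL1 : Real.log ρ₁ < Real.log ρ := Real.log_lt_log hρ₁ hlt1
  have hL2 : Real.log ρ < Real.log ρ₂ := Real.log_lt_log hρ hlt2
  set l : ℝ := (Real.log ρ₂ - Real.log ρ) / (Real.log ρ₂ - Real.log ρ₁) with hl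
  have hden : 0 < Real.log ρ₂ - Real.log ρ₁ := by linarith
  have hl0 : 0 < l := div_pos (by linarith) hden
  have hl1 : l < 1 := by
    rw [hl, div_lt_one hden]; linarith
  have hsum : l * Real.log ρ₁ + (1 - l) * Real.log ρ₂ = Real.log ρ := by
    rw [hl]; field_simp; ring
  obtain ⟨d₁, hd₁0, hN1, hd₁c⟩ := ENNReal.lt_iff_exists_real_btwn.mp hb1
  obtain ⟨d₂, hd₂0, hN2, hd₂c⟩ := ENNReal.lt_iff_exists_real_btwn.mp hb2
  have hd₁lt : d₁ < c ρ₁ := (ENNReal.ofReal_lt_ofReal_iff (hcpos ρ₁ h1)).mp hd₁c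
  have hd₂lt : d₂ < c ρ₂ := (ENNReal.ofReal_lt_ofReal_iff (hcpos ρ₂ h2)).mp hd₂c
  -- termwise bound
  have hterm : ∀ r' c' (k : ℤ), abv (B r' c' k) * ρ ^ k ≤ d₁ ^ l * d₂ ^ (1 - l) := by
    intro r' c' k
    have hb1' : abv (B r' c' k) * ρ₁ ^ k ≤ d₁ :=
      (ENNReal.ofReal_le_ofReal_iff hd₁0).mp ((term_le_Nf abv B ρ₁ r' c' k).trans hN1.le)
    have hb2' : abv (B r' c' k) * ρ₂ ^ k ≤ d₂ :=
      (ENNReal.ofReal_le_ofReal_iff hd₂0).mp ((term_le_Nf abv B ρ₂ r' c' k).trans hN2.le)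
    rcases (abv.nonneg (B r' c' k)).eq_or_lt with h0 | h0
    · rw [← h0, zero_mul]
      positivity
    · have e1 : 0 < abv (B r' c' k) * ρ₁ ^ k := mul_pos h0 (zpow_pos hρ₁ k)
      have e2 : 0 < abv (B r' c' k) * ρ₂ ^ k := mul_pos h0 (zpow_pos hρ₂ k)
      have e : 0 < abv (B r' c' k) * ρ ^ k := mul_pos h0 (zpow_pos hρ k)
      have key : abv (B r' c' k) * ρ ^ k =
          (abv (B r' c' k) * ρ₁ ^ k) ^ l * (abv (B r' c' k) * ρ₂ ^ k) ^ (1 - l) := by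
        have hrhs : 0 < (abv (B r' c' k) * ρ₁ ^ k) ^ l * (abv (B r' c' k) * ρ₂ ^ k) ^ (1 - l) :=
          mul_pos (Real.rpow_pos_of_pos e1 l) (Real.rpow_pos_of_pos e2 (1 - l))
        apply Real.log_injOn_pos (Set.mem_Ioi.mpr e) (Set.mem_Ioi.mpr hrhs)
        rw [Real.log_mul (Real.rpow_pos_of_pos e1 l).ne' (Real.rpow_pos_of_pos e2 (1 - l)).ne',
          Real.log_rpow e1, Real.log_rpow e2,
          Real.log_mul h0.ne' (zpow_pos hρ k).ne',
          Real.log_mul h0.ne' (zpow_pos hρ₁ k).ne',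
          Real.log_mul h0.ne' (zpow_pos hρ₂ k).ne',
          Real.log_zpow, Real.log_zpow, Real.log_zpow]
        linear_combination (k : ℝ) * hsum.symm
      rw [key]
      exact mul_le_mul (Real.rpow_le_rpow e1.le hb1' hl0.le)
        (Real.rpow_le_rpow e2.le hb2' (by linarith)) (Real.rpow_nonneg e2.le _)
        (Real.rpow_nonneg (by positivity) _)
  -- strict comparison with c ρ
  have hstrict : d₁ ^ l * d₂ ^ (1 - l) < (c ρ₁) ^ l * (c ρ₂) ^ (1 - l) :=
    mul_lt_mul'' (Real.rpow_lt_rpow hd₁0 hd₁lt hl0)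
      (Real.rpow_lt_rpow hd₂0 hd₂lt (by linarith))
      (Real.rpow_nonneg hd₁0 _) (Real.rpow_nonneg hd₂0 _)
  have hconc : (c ρ₁) ^ l * (c ρ₂) ^ (1 - l) ≤ c ρ := by
    have hmem1 : Real.log ρ₁ ∈ Real.log '' Set.Ioo r₁ r₂ := ⟨ρ₁, h1, rfl⟩
    have hmem2 : Real.log ρ₂ ∈ Real.log '' Set.Ioo r₁ r₂ := ⟨ρ₂, h2, rfl⟩
    have hcc := hcconc.2 hmem1 hmem2 hl0.le (by linarith : (0:ℝ) ≤ 1 - l) (by ring)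
    simp only [smul_eq_mul] at hcc
    rw [hsum, Real.exp_log hρ₁, Real.exp_log hρ₂, Real.exp_log hρ] at hcc
    have hexp : (c ρ₁) ^ l * (c ρ₂) ^ (1 - l) =
        Real.exp (l * Real.log (c ρ₁) + (1 - l) * Real.log (c ρ₂)) := by
      rw [Real.exp_add, Real.rpow_def_of_pos (hcpos ρ₁ h1), Real.rpow_def_of_pos (hcpos ρ₂ h2)]
      ring_nf
    rw [hexp]
    calc Real.exp (l * Real.log (c ρ₁) + (1 - l) * Real.log (c ρ₂))
        ≤ Real.exp (Real.log (c ρ)) := Real.exp_le_exp.mpr hcc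
      _ = c ρ := Real.exp_log (hcpos ρ hmem)
  have hfinal : Nf abv m B ρ ≤ ENNReal.ofReal (d₁ ^ l * d₂ ^ (1 - l)) :=
    Nf_le abv fun r' c' k => ENNReal.ofReal_le_ofReal (hterm r' c' k)
  refine hfinal.trans_lt ?_
  exact (ENNReal.ofReal_lt_ofReal_iff (hcpos ρ hmem)).mpr (hstrict.trans_le hconc)

/-- 1-dimensional Helly: if the intersection of finitely many order-convex sets
of reals is empty, then two of them are disjoint. -/
lemma exists_disjoint_pair {n : ℕ} (hn : 0 < n) (S : Fin n → Set ℝ)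
    (hconv : ∀ i, ∀ x ∈ S i, ∀ y ∈ S i, ∀ z, x ≤ z → z ≤ y → z ∈ S i)
    (hempty : (⋂ i, S i) = ∅) :
    ∃ i j, S i ∩ S j = ∅ := by
  by_contra hcon
  push_neg at hcon
  have hw : ∀ i j : Fin n, ∃ x, x ∈ S i ∧ x ∈ S j := by
    intro i j
    obtain ⟨x, hx1, hx2⟩ := hcon i j
    exact ⟨x, hx1, hx2⟩
  choose w hw1 hw2 using hw
  haveI : Nonempty (Fin n) := Fin.pos_iff_nonempty.mp hn
  have huniv : (Finset.univ : Finset (Fin n)).Nonempty := Finset.univ_nonempty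
  set mfun : Fin n → ℝ := fun i => Finset.univ.inf' huniv (w i) with hmfun
  obtain ⟨istar, -, histar⟩ := Finset.exists_mem_eq_sup' huniv mfun
  have hmem : ∀ k, mfun istar ∈ S k := by
    intro k
    obtain ⟨j₀, -, hj₀⟩ := Finset.exists_mem_eq_inf' huniv (w k)
    have hmk : mfun k ∈ S k := by
      rw [hmfun]; simp only []; rw [hj₀]; exact hw1 k j₀
    have h1 : mfun k ≤ mfun istar := by
      rw [← histar]; exact Finset.le_sup' mfun (Finset.mem_univ k)
    have h2 : mfun istar ≤ w istar k := Finset.inf'_le (w istar) (Finset.mem_univ k)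
    exact hconv k (mfun k) hmk (w istar k) (hw2 istar k) (mfun istar) h1 h2
  have : mfun istar ∈ ⋂ i, S i := Set.mem_iInter.mpr hmem
  rw [hempty] at this
  exact this

/-- The key two-matrix lemma. -/
lemma pair_lemma {m : ℕ} (hna : IsNonarchimedean (abv : K → ℝ)) {r₁ r₂ : ℝ} (hr₁ : 0 < r₁)
    {c : ℝ → ℝ} (hcpos : ∀ ρ ∈ Set.Ioo r₁ r₂, 0 < c ρ)
    (hcconc : ConcaveOn ℝ (Real.log '' Set.Ioo r₁ r₂)
      (fun t => Real.log (c (Real.exp t))))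
    (P R : Matrix (Fin m) (Fin m) (ℤ → K))
    (hPR : ∀ ρ ∈ Set.Ioo r₁ r₂,
      ENNReal.ofReal (c ρ) ≤ max (Nf abv m P ρ) (Nf abv m R ρ)) :
    (∀ ρ ∈ Set.Ioo r₁ r₂, ENNReal.ofReal (c ρ) ≤ Nf abv m P ρ) ∨
    (∀ ρ ∈ Set.Ioo r₁ r₂, ENNReal.ofReal (c ρ) ≤ Nf abv m R ρ) ∨
    (∀ ρ ∈ Set.Ioo r₁ r₂, ENNReal.ofReal (c ρ) ≤ Nf abv m (P + R) ρ) := by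
  classical
  by_contra hcon
  push_neg at hcon
  obtain ⟨hc1, hc2, hc3⟩ := hcon
  obtain ⟨u, hu, huP⟩ := hc1
  obtain ⟨v, hv, hvR⟩ := hc2
  obtain ⟨w, hw, hwS⟩ := hc3
  -- split along coincidence of absolute values of coefficients
  set Pe : Matrix (Fin m) (Fin m) (ℤ → K) :=
    fun a b k => if abv (P a b k) = abv (R a b k) then P a b k else 0 with hPedef
  set Pc : Matrix (Fin m) (Fin m) (ℤ → K) :=
    fun a b k => if abv (P a b k) = abv (R a b k) then 0 else P a b k with hPcdef
  set Rc : Matrix (Fin m) (Fin m) (ℤ → K) :=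
    fun a b k => if abv (P a b k) = abv (R a b k) then 0 else R a b k with hRcdef
  have hPe_apply : ∀ a b (k : ℤ), Pe a b k =
      if abv (P a b k) = abv (R a b k) then P a b k else 0 := fun a b k => rfl
  have hPc_apply : ∀ a b (k : ℤ), Pc a b k =
      if abv (P a b k) = abv (R a b k) then 0 else P a b k := fun a b k => rfl
  have hRc_apply : ∀ a b (k : ℤ), Rc a b k =
      if abv (P a b k) = abv (R a b k) then 0 else R a b k := fun a b k => rfl
  -- F0: the pieces are dominated
  have F0a : ∀ ρ : ℝ, Nf abv m Pe ρ ≤ Nf abv m P ρ := by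
    intro ρ
    refine Nf_le abv fun a b k => ?_
    rw [hPe_apply]
    by_cases hcnd : abv (P a b k) = abv (R a b k)
    · rw [if_pos hcnd]; exact term_le_Nf abv P ρ a b k
    · rw [if_neg hcnd]; simp
  have F0a' : ∀ ρ : ℝ, Nf abv m Pe ρ ≤ Nf abv m R ρ := by
    intro ρ
    refine Nf_le abv fun a b k => ?_
    rw [hPe_apply]
    by_cases hcnd : abv (P a b k) = abv (R a b k)
    · rw [if_pos hcnd]
      have : abv (P a b k) * ρ ^ k = abv (R a b k) * ρ ^ k := by rw [hcnd]
      rw [this]; exact term_le_Nf abv R ρ a b k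
    · rw [if_neg hcnd]; simp
  have F0b : ∀ ρ : ℝ, Nf abv m Pc ρ ≤ Nf abv m P ρ := by
    intro ρ
    refine Nf_le abv fun a b k => ?_
    rw [hPc_apply]
    by_cases hcnd : abv (P a b k) = abv (R a b k)
    · rw [if_pos hcnd]; simp
    · rw [if_neg hcnd]; exact term_le_Nf abv P ρ a b k
  have F0c : ∀ ρ : ℝ, Nf abv m Rc ρ ≤ Nf abv m R ρ := by
    intro ρ
    refine Nf_le abv fun a b k => ?_
    rw [hRc_apply]
    by_cases hcnd : abv (P a b k) = abv (R a b k)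
    · rw [if_pos hcnd]; simp
    · rw [if_neg hcnd]; exact term_le_Nf abv R ρ a b k
  -- F1 : P is bounded by its pieces
  have F1 : ∀ ρ : ℝ, Nf abv m P ρ ≤ max (Nf abv m Pe ρ) (Nf abv m Pc ρ) := by
    intro ρ
    refine Nf_le abv fun a b k => ?_
    by_cases hcnd : abv (P a b k) = abv (R a b k)
    · refine le_max_of_le_left ?_
      have : abv (P a b k) = abv (Pe a b k) := by rw [hPe_apply, if_pos hcnd]
      rw [this]; exact term_le_Nf abv Pe ρ a b k
    · refine le_max_of_le_right ?_
      have : abv (P a b k) = abv (Pc a b k) := by rw [hPc_apply, if_neg hcnd]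
      rw [this]; exact term_le_Nf abv Pc ρ a b k
  have F2 : ∀ ρ : ℝ, Nf abv m R ρ ≤ max (Nf abv m Pe ρ) (Nf abv m Rc ρ) := by
    intro ρ
    refine Nf_le abv fun a b k => ?_
    by_cases hcnd : abv (P a b k) = abv (R a b k)
    · refine le_max_of_le_left ?_
      have : abv (R a b k) = abv (Pe a b k) := by rw [hPe_apply, if_pos hcnd, hcnd]
      rw [this]; exact term_le_Nf abv Pe ρ a b k
    · refine le_max_of_le_right ?_
      have : abv (R a b k) = abv (Rc a b k) := by rw [hRc_apply, if_neg hcnd]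
      rw [this]; exact term_le_Nf abv Rc ρ a b k
  -- F3 : the sum dominates the non-coincidence pieces
  have F3P : ∀ ρ : ℝ, 0 < ρ → Nf abv m Pc ρ ≤ Nf abv m (P + R) ρ := by
    intro ρ hρ
    refine Nf_le abv fun a b k => ?_
    rw [hPc_apply]
    by_cases hcnd : abv (P a b k) = abv (R a b k)
    · rw [if_pos hcnd]; simp
    · rw [if_neg hcnd]
      have h1 : abv (P a b k) ≤ abv (P a b k + R a b k) := abv_le_abv_add abv hna hcnd
      have h2 : abv (P a b k) * ρ ^ k ≤ abv ((P + R) a b k) * ρ ^ k := by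
        rw [Matrix.add_apply, Pi.add_apply]
        exact mul_le_mul_of_nonneg_right h1 (zpow_pos hρ k).le
      exact (ENNReal.ofReal_le_ofReal h2).trans (term_le_Nf abv (P + R) ρ a b k)
  have F3R : ∀ ρ : ℝ, 0 < ρ → Nf abv m Rc ρ ≤ Nf abv m (P + R) ρ := by
    intro ρ hρ
    refine Nf_le abv fun a b k => ?_
    rw [hRc_apply]
    by_cases hcnd : abv (P a b k) = abv (R a b k)
    · rw [if_pos hcnd]; simp
    · rw [if_neg hcnd]
      have h1 : abv (R a b k) ≤ abv (R a b k + P a b k) :=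
        abv_le_abv_add abv hna (Ne.symm hcnd)
      have h2 : abv (R a b k) * ρ ^ k ≤ abv ((P + R) a b k) * ρ ^ k := by
        rw [Matrix.add_apply, Pi.add_apply, add_comm (P a b k)]
        exact mul_le_mul_of_nonneg_right h1 (zpow_pos hρ k).le
      exact (ENNReal.ofReal_le_ofReal h2).trans (term_le_Nf abv (P + R) ρ a b k)
  -- point facts
  have hq_u : Nf abv m Pe u < ENNReal.ofReal (c u) := (F0a u).trans_lt huP
  have hp_u : Nf abv m Pc u < ENNReal.ofReal (c u) := (F0b u).trans_lt huP
  have hr_u : ENNReal.ofReal (c u) ≤ Nf abv m Rc u := by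
    rcases le_max_iff.mp (hPR u hu) with h | h
    · exact absurd h (not_le.mpr huP)
    · rcases le_max_iff.mp (h.trans (F2 u)) with h' | h'
      · exact absurd h' (not_le.mpr hq_u)
      · exact h'
  have hq_v : Nf abv m Pe v < ENNReal.ofReal (c v) := (F0a' v).trans_lt hvR
  have hr_v : Nf abv m Rc v < ENNReal.ofReal (c v) := (F0c v).trans_lt hvR
  have hp_v : ENNReal.ofReal (c v) ≤ Nf abv m Pc v := by
    rcases le_max_iff.mp (hPR v hv) with h | h
    · rcases le_max_iff.mp (h.trans (F1 v)) with h' | h'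
      · exact absurd h' (not_le.mpr hq_v)
      · exact h'
    · exact absurd h (not_le.mpr hvR)
  have hwpos : 0 < w := hr₁.trans hw.1
  have hp_w : Nf abv m Pc w < ENNReal.ofReal (c w) := (F3P w hwpos).trans_lt hwS
  have hr_w : Nf abv m Rc w < ENNReal.ofReal (c w) := (F3R w hwpos).trans_lt hwS
  have hq_w : ENNReal.ofReal (c w) ≤ Nf abv m Pe w := by
    rcases le_max_iff.mp (hPR w hw) with h | h
    · rcases le_max_iff.mp (h.trans (F1 w)) with h' | h'
      · exact h'
      · exact absurd h' (not_le.mpr hp_w)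
    · rcases le_max_iff.mp (h.trans (F2 w)) with h' | h'
      · exact h'
      · exact absurd h' (not_le.mpr hr_w)
  -- convexity contradiction
  have key : ∀ (X : Matrix (Fin m) (Fin m) (ℤ → K)) (x y z : ℝ),
      x ∈ Set.Ioo r₁ r₂ → y ∈ Set.Ioo r₁ r₂ → z ∈ Set.Ioo r₁ r₂ →
      x ≤ z → z ≤ y →
      Nf abv m X x < ENNReal.ofReal (c x) → Nf abv m X y < ENNReal.ofReal (c y) →
      Nf abv m X z < ENNReal.ofReal (c z) := by
    intro X x y z hx hy hz hxz hzy hbx hby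
    exact bad_mid abv hr₁ hcpos hcconc X hx hz hy hxz hzy hbx hby
  rcases le_total u v with huv | huv <;> rcases le_total v w with hvw | hvw <;>
    rcases le_total u w with huw | huw
  · exact absurd (key Pc u w v hu hw hv huv hvw hp_u hp_w) (not_lt.mpr hp_v)
  · exact absurd (key Pc u w v hu hw hv huv hvw hp_u hp_w) (not_lt.mpr hp_v)
  · exact absurd (key Pe u v w hu hv hw huw hvw hq_u hq_v) (not_lt.mpr hq_w)
  · exact absurd (key Rc w v u hw hv hu huw huv hr_w hr_v) (not_lt.mpr hr_u)
  · exact absurd (key Rc v w u hv hw hu huv huw hr_v hr_w) (not_lt.mpr hr_u)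
  · exact absurd (key Pe v u w hv hu hw hvw huw hq_v hq_u) (not_lt.mpr hq_w)
  · exact absurd (key Rc w v u hw hv hu (hvw.trans huv) (huw.trans hvw) hr_w hr_v) (not_lt.mpr hr_u)
  · exact absurd (key Pc w u v hw hu hv hvw huv hp_w hp_u) (not_lt.mpr hp_v)
  
end Thm504Aux

/-- Théorème 5.0-4: if `c` is logarithmically concave on `(r₁, r₂)` and
`A₁, …, Aₙ` are `m × m` matrices of Laurent series converging on the annulus
`r₁ < |x| < r₂` such that `max_i ‖A_i‖(ρ) ≥ c ρ` for all `ρ ∈ (r₁, r₂)`, then there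
are scalars `ε i ∈ {0, 1}` with `‖∑ i, ε i • A i‖(ρ) ≥ c ρ` for all `ρ ∈ (r₁, r₂)`. -/
theorem exists_zero_one_combination_ge {K : Type*} [Field K]
    (abv : AbsoluteValue K ℝ) (hna : IsNonarchimedean (abv : K → ℝ))
    (r₁ r₂ : ℝ) (hr₁ : 0 < r₁) (hr : r₁ < r₂)
    (m n : ℕ)
    (A : Fin n → Matrix (Fin m) (Fin m) (ℤ → K))
    (hconv : ∀ i r' c', ∀ ρ ∈ Set.Ioo r₁ r₂,
      Tendsto (fun k : ℤ => abv (A i r' c' k) * ρ ^ k) cofinite (nhds 0))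
    (c : ℝ → ℝ)
    (hcpos : ∀ ρ ∈ Set.Ioo r₁ r₂, 0 < c ρ)
    (hcconc : ConcaveOn ℝ (Real.log '' Set.Ioo r₁ r₂)
      (fun t => Real.log (c (Real.exp t))))
    (N : Matrix (Fin m) (Fin m) (ℤ → K) → ℝ → ℝ≥0∞)
    (hN : ∀ B ρ, N B ρ =
      ⨆ r', ⨆ c', ⨆ k : ℤ, ENNReal.ofReal (abv (B r' c' k) * ρ ^ k))
    (hlower : ∀ ρ ∈ Set.Ioo r₁ r₂, ENNReal.ofReal (c ρ) ≤ ⨆ i, N (A i) ρ) :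
    ∃ ε : Fin n → K, (∀ i, ε i = 0 ∨ ε i = 1) ∧
      ∀ ρ ∈ Set.Ioo r₁ r₂, ENNReal.ofReal (c ρ) ≤ N (∑ i, ε i • A i) ρ := by
  classical
  have hNf : ∀ B ρ, N B ρ = Thm504Aux.Nf abv m B ρ := hN
  -- the case `n = 0` is vacuous:
  rcases Nat.eq_zero_or_pos n with rfl | hn
  · refine ⟨fun _ => 0, fun i => Or.inl rfl, fun ρ hρ => ?_⟩
    exfalso
    have h0 : (⨆ i : Fin 0, N (A i) ρ) = 0 := by
      simp
    have := hlower ρ hρ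
    rw [h0] at this
    have hpos : 0 < ENNReal.ofReal (c ρ) := ENNReal.ofReal_pos.mpr (hcpos ρ hρ)
    exact absurd (le_antisymm this zero_le) hpos.ne'
  -- the bad sets
  set Bad : Fin n → Set ℝ :=
    fun i => {ρ | ρ ∈ Set.Ioo r₁ r₂ ∧ Thm504Aux.Nf abv m (A i) ρ < ENNReal.ofReal (c ρ)} with hBad
  have hconvS : ∀ i, ∀ x ∈ Bad i, ∀ y ∈ Bad i, ∀ z, x ≤ z → z ≤ y → z ∈ Bad i := by
    intro i x hx y hy z hxz hzy
    have hzmem : z ∈ Set.Ioo r₁ r₂ := ⟨lt_of_lt_of_le hx.1.1 hxz, lt_of_le_of_lt hzy hy.1.2⟩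
    exact ⟨hzmem, Thm504Aux.bad_mid abv hr₁ hcpos hcconc (A i) hx.1 hzmem hy.1 hxz hzy hx.2 hy.2⟩
  have hempty : (⋂ i, Bad i) = ∅ := by
    rw [Set.eq_empty_iff_forall_notMem]
    intro ρ hρmem
    have hall : ∀ i, ρ ∈ Bad i := Set.mem_iInter.mp hρmem
    have hρIoo : ρ ∈ Set.Ioo r₁ r₂ := (hall ⟨0, hn⟩).1
    haveI : Nonempty (Fin n) := Fin.pos_iff_nonempty.mp hn
    obtain ⟨i₀, hi₀⟩ := Finite.exists_max (fun i => Thm504Aux.Nf abv m (A i) ρ)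
    have hsup : (⨆ i, N (A i) ρ) ≤ Thm504Aux.Nf abv m (A i₀) ρ := by
      refine iSup_le fun i => ?_
      rw [hNf]; exact hi₀ i
    have := (hlower ρ hρIoo).trans hsup
    exact absurd this (not_le.mpr (hall i₀).2)
  obtain ⟨i, j, hij⟩ := Thm504Aux.exists_disjoint_pair hn Bad hconvS hempty
  -- if i = j, the bad set of `A i` is empty
  rcases eq_or_ne i j with rfl | hne
  · rw [Set.inter_self] at hij
    have hP : ∀ ρ ∈ Set.Ioo r₁ r₂, ENNReal.ofReal (c ρ) ≤ Thm504Aux.Nf abv m (A i) ρ := by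
      intro ρ hρ
      by_contra habs
      push_neg at habs
      have : ρ ∈ Bad i := ⟨hρ, habs⟩
      rw [hij] at this
      exact this
    refine ⟨fun t => if t = i then 1 else 0, fun t => by by_cases h : t = i <;> simp [h],
      fun ρ hρ => ?_⟩
    have hsum : (∑ t, (if t = i then (1 : K) else 0) • A t) = A i := by
      simp [ite_smul, Finset.sum_ite_eq']
    rw [hsum, hNf]
    exact hP ρ hρ
  -- i ≠ j : use the pair lemma
  have hPR : ∀ ρ ∈ Set.Ioo r₁ r₂,
      ENNReal.ofReal (c ρ) ≤ max (Thm504Aux.Nf abv m (A i) ρ) (Thm504Aux.Nf abv m (A j) ρ) := by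
    intro ρ hρ
    by_contra habs
    push_neg at habs
    rw [max_lt_iff] at habs
    have : ρ ∈ Bad i ∩ Bad j := ⟨⟨hρ, habs.1⟩, ⟨hρ, habs.2⟩⟩
    rw [hij] at this
    exact this
  rcases Thm504Aux.pair_lemma abv hna hr₁ hcpos hcconc (A i) (A j) hPR with hP | hP | hP
  · refine ⟨fun t => if t = i then 1 else 0, fun t => by by_cases h : t = i <;> simp [h],
      fun ρ hρ => ?_⟩
    have hsum : (∑ t, (if t = i then (1 : K) else 0) • A t) = A i := by
      simp [ite_smul, Finset.sum_ite_eq']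
    rw [hsum, hNf]
    exact hP ρ hρ
  · refine ⟨fun t => if t = j then 1 else 0, fun t => by by_cases h : t = j <;> simp [h],
      fun ρ hρ => ?_⟩
    have hsum : (∑ t, (if t = j then (1 : K) else 0) • A t) = A j := by
      simp [ite_smul, Finset.sum_ite_eq']
    rw [hsum, hNf]
    exact hP ρ hρ
  · refine ⟨fun t => if t = i ∨ t = j then 1 else 0,
      fun t => by by_cases h : t = i ∨ t = j <;> simp [h], fun ρ hρ => ?_⟩
    have hterm : ∀ t : Fin n, (if t = i ∨ t = j then (1 : K) else 0) • A t =
        (if t = i then A t else 0) + (if t = j then A t else 0) := by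
      intro t
      by_cases h1 : t = i
      · subst h1
        simp [hne]
      · by_cases h2 : t = j
        · subst h2
          simp [h1]
        · simp [h1, h2]
    have hsum : (∑ t, (if t = i ∨ t = j then (1 : K) else 0) • A t) = A i + A j := by
      rw [Finset.sum_congr rfl (fun t _ => hterm t), Finset.sum_add_distrib,
        Finset.sum_ite_eq' Finset.univ i A, Finset.sum_ite_eq' Finset.univ j A]
      simp
    rw [hsum, hNf]
    exact hP ρ hρ
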